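/- Let R be a commutative ring, 0 → M' → M → R/J → 0 an exact sequence of finitely generated R-modules where the quotient is cyclic of the form R/J for an ideal J generated by one element x. If Fitt_R(M) is principal generated by θ, then x · Fitt_R(M') = Fitt_R(M), i.e. Fitt_R(M') is generated by θ/x whenever x is a non-zerodivisor dividing θ. -/

import Mathlib

/-- The (0-th) Fitting ideal of a module `M` over a commutative ring `R`. -/
noncomputable def fittingIdeal (R M : Type*) [CommRing R] [AddCommGroup M]
    [Module R M] : Ideal R :=
  ⨆ (n : ℕ) (φ : (Fin n → R) →ₗ[R] M) (_ : Function.Surjective φ),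
    Ideal.span {d : R | ∃ A : Matrix (Fin n) (Fin n) R,
      (∀ i, φ (A i) = 0) ∧ d = A.det}

lemma det_mem_fittingIdeal {R M : Type*} [CommRing R] [AddCommGroup M] [Module R M]
    {n : ℕ} {φ : (Fin n → R) →ₗ[R] M} (hφ : Function.Surjective φ)
    {A : Matrix (Fin n) (Fin n) R} (hA : ∀ i, φ (A i) = 0) :
    A.det ∈ fittingIdeal R M := by
  have h1 : Ideal.span {d : R | ∃ B : Matrix (Fin n) (Fin n) R, (∀ i, φ (B i) = 0) ∧ d = B.det}
      ≤ fittingIdeal R M :=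
    le_iSup_of_le n (le_iSup_of_le φ (le_iSup_of_le hφ le_rfl))
  exact h1 (Ideal.subset_span ⟨A, hA, rfl⟩)

lemma fittingIdeal_le' {R M : Type*} [CommRing R] [AddCommGroup M] [Module R M] {I : Ideal R}
    (h : ∀ (n : ℕ) (φ : (Fin n → R) →ₗ[R] M), Function.Surjective φ →
      ∀ A : Matrix (Fin n) (Fin n) R, (∀ i, φ (A i) = 0) → A.det ∈ I) :
    fittingIdeal R M ≤ I :=
  iSup_le fun n => iSup_le fun φ => iSup_le fun hφ => Ideal.span_le.2
    (by rintro d ⟨A, hA, rfl⟩; exact h n φ hφ A hA)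

section Aux

variable {R M' M : Type*} [CommRing R] [AddCommGroup M'] [AddCommGroup M]
  [Module R M'] [Module R M]

/-- the extension-by-one-generator linear map `(Fin (k+1) → R) →ₗ M`. -/
noncomputable def extMap (k : ℕ) (L : (Fin k → R) →ₗ[R] M) (m₀ : M) :
    (Fin (k+1) → R) →ₗ[R] M :=
  (L.comp (LinearMap.funLeft R R Fin.castSucc))
    + (LinearMap.proj (R := R) (φ := fun _ : Fin (k+1) => R) (Fin.last k)).smulRight m₀

lemma extMap_apply (k : ℕ) (L : (Fin k → R) →ₗ[R] M) (m₀ : M) (w : Fin (k+1) → R) :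
    extMap k L m₀ w = L (w ∘ Fin.castSucc) + w (Fin.last k) • m₀ := rfl

lemma symm_castSucc (k : ℕ) (j : Fin k) :
    (finSumFinEquiv (n := 1)).symm (Fin.castSucc j) = Sum.inl j := by
  rw [Equiv.symm_apply_eq, finSumFinEquiv_apply_left]; rfl

lemma symm_last (k : ℕ) :
    (finSumFinEquiv (n := 1)).symm (Fin.last k) = Sum.inr 0 := by
  rw [Equiv.symm_apply_eq, finSumFinEquiv_apply_right]; ext; simp

/-- rows of the reindexed block matrix lie in the kernel of `extMap`. -/
lemma extMap_reindex_row (k : ℕ) (L : (Fin k → R) →ₗ[R] M) (m₀ : M)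
    (B : Matrix (Fin k ⊕ Fin 1) (Fin k ⊕ Fin 1) R)
    (hrow : ∀ sb : Fin k ⊕ Fin 1,
      L (fun j => B sb (Sum.inl j)) + B sb (Sum.inr 0) • m₀ = 0)
    (i : Fin (k+1)) :
    extMap k L m₀ ((Matrix.reindex finSumFinEquiv finSumFinEquiv B) i) = 0 := by
  rw [extMap_apply]
  have h1 : ((Matrix.reindex finSumFinEquiv finSumFinEquiv B) i) ∘ Fin.castSucc
      = fun j => B (finSumFinEquiv.symm i) (Sum.inl j) := by
    funext j
    simp only [Function.comp, Matrix.reindex_apply, Matrix.submatrix_apply]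
    rw [symm_castSucc]
  have h2 : (Matrix.reindex finSumFinEquiv finSumFinEquiv B) i (Fin.last k)
      = B (finSumFinEquiv.symm i) (Sum.inr 0) := by
    simp only [Matrix.reindex_apply, Matrix.submatrix_apply]
    rw [symm_last]
  rw [h1, h2]
  exact hrow _

end Aux

/-- Let `R` be a commutative ring and `0 → M' → M → R/(x) → 0` an exact
sequence of finitely generated `R`-modules whose cokernel is cyclic, of the form `R/(x)`
with `x` a non-zerodivisor.  If `Fitt_R(M)` is principal, generated by `θ`, then
`(x) · Fitt_R(M') = Fitt_R(M)`; i.e. `Fitt_R(M')` is generated by `θ/x`. -/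
theorem stmt10 (R : Type*) [CommRing R]
    (M' M : Type*) [AddCommGroup M'] [AddCommGroup M] [Module R M'] [Module R M]
    [Module.Finite R M'] [Module.Finite R M]
    (x : R) (hx : x ∈ nonZeroDivisors R)
    (f : M' →ₗ[R] M) (g : M →ₗ[R] R ⧸ Ideal.span {x})
    (hf : Function.Injective f) (hg : Function.Surjective g)
    (hexact : Function.Exact f g)
    (θ : R) (hθ : fittingIdeal R M = Ideal.span {θ}) :
    Ideal.span {x} * fittingIdeal R M' = fittingIdeal R M := by
  classical
  have hker : ∀ y : M, g y = 0 → ∃ w : M', f w = y := fun y hy => (hexact y).mp hy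
  set q : R →+* R ⧸ Ideal.span {x} := Ideal.Quotient.mk (Ideal.span {x}) with hqdef
  have hsmul : ∀ (a b : R), a • (q b) = q (a * b) := fun a b => rfl
  have hq0 : ∀ a : R, q a = 0 ↔ ∃ c, a = x * c := by
    intro a
    rw [hqdef, Ideal.Quotient.eq_zero_iff_mem, Ideal.mem_span_singleton]
    exact Iff.rfl
  -- direction 2 : for every y in Fitt(M'), x*y ∈ Fitt(M)
  have dir2 : ∀ y ∈ fittingIdeal R M', x * y ∈ fittingIdeal R M := by
    have hle : fittingIdeal R M'
        ≤ Submodule.comap (LinearMap.lsmul R R x) (fittingIdeal R M) := by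
      apply fittingIdeal_le'
      intro k ψ hψ C hC
      obtain ⟨m₀, hm₀⟩ := hg 1
      have hxm₀ : g (x • m₀) = 0 := by
        rw [map_smul, hm₀]
        show x • (q 1) = 0
        rw [hsmul, mul_one, (hq0 x).2 ⟨1, (mul_one x).symm⟩]
      obtain ⟨u, hu⟩ := hker _ hxm₀
      obtain ⟨c, hc⟩ := hψ u
      set φ' : (Fin (k+1) → R) →ₗ[R] M := extMap k (f.comp ψ) m₀ with hφ'def
      have hsurj : Function.Surjective φ' := by
        intro yy
        obtain ⟨a, ha⟩ := Ideal.Quotient.mk_surjective (g yy)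
        have h0 : g (yy - a • m₀) = 0 := by
          rw [map_sub, map_smul, hm₀, ← ha]
          show q a - a • q 1 = 0
          rw [hsmul, mul_one, sub_self]
        obtain ⟨w', hw'⟩ := hker _ h0
        obtain ⟨v, hv⟩ := hψ w'
        refine ⟨Fin.snoc v a, ?_⟩
        rw [hφ'def, extMap_apply]
        have h1 : (Fin.snoc v a : Fin (k+1) → R) ∘ Fin.castSucc = v := by
          funext j; simp [Fin.snoc_castSucc]
        rw [h1, Fin.snoc_last, LinearMap.comp_apply, hv, hw']
        abel
      set B : Matrix (Fin k ⊕ Fin 1) (Fin k ⊕ Fin 1) R :=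
        Matrix.fromBlocks C 0 (Matrix.of fun _ j => -(c j)) (Matrix.of fun _ _ => x) with hB
      have hrow : ∀ i, φ' ((Matrix.reindex finSumFinEquiv finSumFinEquiv B) i) = 0 := by
        apply extMap_reindex_row
        rintro (j | z)
        · simp only [hB, Matrix.fromBlocks_apply₁₁, Matrix.fromBlocks_apply₁₂,
            LinearMap.comp_apply, Matrix.of_apply]
          rw [hC j]
          simp
        · simp only [hB, Matrix.fromBlocks_apply₂₁, Matrix.fromBlocks_apply₂₂,
            LinearMap.comp_apply, Matrix.of_apply]
          have : (fun j => -(c j)) = -c := rfl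
          rw [this, map_neg, map_neg, hc, hu]
          abel
      have hdet : ((Matrix.reindex finSumFinEquiv finSumFinEquiv B)).det = C.det * x := by
        rw [Matrix.det_reindex_self, hB, Matrix.det_fromBlocks_zero₁₂, Matrix.det_fin_one, Matrix.of_apply]
      have hmem := det_mem_fittingIdeal hsurj hrow
      rw [hdet] at hmem
      simpa [Submodule.mem_comap, mul_comm] using hmem
    intro y hy
    have := hle hy
    simpa [Submodule.mem_comap] using this
  refine le_antisymm (Ideal.mul_le.2 fun a ha y hy => ?_) (fittingIdeal_le' ?_)
  · obtain ⟨cc, rfl⟩ := Ideal.mem_span_singleton'.1 ha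
    rw [mul_assoc]
    exact Ideal.mul_mem_left _ cc (dir2 y hy)
  -- direction 1
  · intro n φ hφ A hA
    have hr : ∀ i : Fin n, ∃ a, q a = g (φ (fun j => if i = j then (1:R) else 0)) :=
      fun i => Ideal.Quotient.mk_surjective _
    choose r hri using hr
    have hgφ : ∀ v : Fin n → R, g (φ v) = q (∑ i, v i * r i) := by
      intro v
      rw [LinearMap.pi_apply_eq_sum_univ φ v, map_sum, map_sum]
      refine Finset.sum_congr rfl fun i _ => ?_
      rw [map_smul, ← hri, hsmul]
    obtain ⟨m₀, hm₀⟩ := hg 1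
    obtain ⟨s, hs⟩ := hφ m₀
    have hqsr : q (∑ i, s i * r i) = q 1 := by
      rw [← hgφ, hs, hm₀, map_one]
    obtain ⟨t, ht⟩ : ∃ t, (∑ i, s i * r i) - 1 = x * t := by
      apply (hq0 _).1
      rw [map_sub, hqsr, sub_self]
    have hm'ex : ∀ i : Fin n,
        ∃ w : M', f w = φ (fun j => if i = j then 1 else 0) - r i • (φ s) := by
      intro i
      apply hker
      rw [map_sub, map_smul, ← hri, hs, hm₀]
      show q (r i) - r i • q 1 = 0
      rw [hsmul, mul_one, sub_self]
    choose m' hm' using hm'ex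
    have hxm₀ : g (x • φ s) = 0 := by
      rw [map_smul, hs, hm₀]
      show x • (q 1) = 0
      rw [hsmul, mul_one, (hq0 x).2 ⟨1, (mul_one x).symm⟩]
    obtain ⟨u, hu⟩ := hker _ hxm₀
    have hkey : ∀ v : Fin n → R,
        f (∑ i, v i • m' i) = φ v - (∑ i, v i * r i) • (φ s) := by
      intro v
      rw [map_sum]
      simp_rw [map_smul, hm', smul_sub, smul_smul]
      rw [Finset.sum_sub_distrib, ← LinearMap.pi_apply_eq_sum_univ φ v, ← Finset.sum_smul]
    set L : (Fin n → R) →ₗ[R] M' := Fintype.linearCombination R m' with hLdef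
    have hLapp : ∀ v : Fin n → R, L v = ∑ i, v i • m' i := fun v =>
      Fintype.linearCombination_apply R m' v
    set ψ' : (Fin (n+1) → R) →ₗ[R] M' := extMap n L u with hψ'def
    have hψsurj : Function.Surjective ψ' := by
      intro w
      obtain ⟨v, hv⟩ := hφ (f w)
      have h0 : q (∑ i, v i * r i) = 0 := by
        rw [← hgφ, hv, (hexact (f w)).mpr ⟨w, rfl⟩]
      obtain ⟨bb, hbb⟩ := (hq0 _).1 h0
      refine ⟨Fin.snoc v bb, ?_⟩
      rw [hψ'def, extMap_apply]
      have h1 : (Fin.snoc v bb : Fin (n+1) → R) ∘ Fin.castSucc = v := by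
        funext j; simp [Fin.snoc_castSucc]
      rw [h1, Fin.snoc_last]
      apply hf
      rw [map_add, hLapp, hkey, map_smul, hu, hbb, hv, smul_smul, mul_comm bb x]
      abel
    have hbex : ∀ i : Fin n, ∃ cb, (∑ j, A i j * r j) = x * cb := by
      intro i
      apply (hq0 _).1
      rw [← hgφ, hA i, map_zero]
    choose b hb using hbex
    set bcol : Matrix (Fin n) (Fin 1) R := Matrix.of fun i _ => b i with hbcol
    set srow : Matrix (Fin 1) (Fin n) R := Matrix.of fun _ j => s j with hsrow
    set tblk : Matrix (Fin 1) (Fin 1) R := Matrix.of fun _ _ => t with htblk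
    set rcol : Matrix (Fin n) (Fin 1) R := Matrix.of fun i _ => -(r i) with hrcol
    set xblk : Matrix (Fin 1) (Fin 1) R := Matrix.of fun _ _ => x with hxblk
    set mone : Matrix (Fin 1) (Fin 1) R := Matrix.of fun _ _ => (-1 : R) with hmone
    set B : Matrix (Fin n ⊕ Fin 1) (Fin n ⊕ Fin 1) R :=
      Matrix.fromBlocks A bcol srow tblk with hB
    have hrow : ∀ i, ψ' ((Matrix.reindex finSumFinEquiv finSumFinEquiv B) i) = 0 := by
      apply extMap_reindex_row
      rintro (j | z)
      · simp only [hB, Matrix.fromBlocks_apply₁₁, Matrix.fromBlocks_apply₁₂, hbcol,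
          Matrix.of_apply]
        apply hf
        rw [map_add, map_zero, hLapp, hkey, map_smul, hu, hb j, smul_smul, mul_comm (b j) x,
          hA j]
        abel
      · simp only [hB, Matrix.fromBlocks_apply₂₁, Matrix.fromBlocks_apply₂₂, hsrow, htblk,
          Matrix.of_apply]
        apply hf
        rw [map_add, map_zero, hLapp, hkey, map_smul, hu, smul_smul]
        have hsr : (∑ i, s i * r i) = 1 + x * t := by rw [← ht]; ring
        rw [hsr, hs, mul_comm t x]
        rw [add_smul, one_smul]
        abel
    -- determinant identity
    set P : Matrix (Fin n ⊕ Fin 1) (Fin n ⊕ Fin 1) R :=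
      Matrix.fromBlocks 1 rcol 0 xblk with hP
    have hsr : (∑ i, s i * r i) = 1 + x * t := by linear_combination ht
    have h11 : A * (1 : Matrix (Fin n) (Fin n) R) + bcol * (0 : Matrix (Fin 1) (Fin n) R)
        = A := by
      rw [Matrix.mul_one, Matrix.mul_zero, add_zero]
    have h12 : A * rcol + bcol * xblk = (0 : Matrix (Fin n) (Fin 1) R) := by
      ext i z
      simp only [Matrix.add_apply, Matrix.mul_apply, Matrix.zero_apply, Fin.sum_univ_one,
        hrcol, hbcol, hxblk, Matrix.of_apply, mul_neg]
      rw [Finset.sum_neg_distrib, hb i]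
      ring
    have h21 : srow * (1 : Matrix (Fin n) (Fin n) R) + tblk * (0 : Matrix (Fin 1) (Fin n) R)
        = srow := by
      rw [Matrix.mul_one, Matrix.mul_zero, add_zero]
    have h22 : srow * rcol + tblk * xblk = mone := by
      ext z z'
      simp only [Matrix.add_apply, Matrix.mul_apply, Fin.sum_univ_one, hrcol, hsrow, htblk,
        hxblk, hmone, Matrix.of_apply, mul_neg]
      rw [Finset.sum_neg_distrib, hsr]
      ring
    have hmul : B * P = Matrix.fromBlocks A 0 srow mone := by
      rw [hB, hP, Matrix.fromBlocks_multiply, h11, h12, h21, h22]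
    have hdetP : P.det = x := by
      rw [hP, Matrix.det_fromBlocks_zero₂₁, Matrix.det_one, Matrix.det_fin_one, one_mul]
      rfl
    have hdetBP : (B * P).det = A.det * (-1) := by
      rw [hmul, Matrix.det_fromBlocks_zero₁₂, Matrix.det_fin_one]
      rfl
    have hfinal : A.det = x * (-(B.det)) := by
      have h1 : B.det * x = A.det * (-1) := by rw [← hdetP, ← Matrix.det_mul, hdetBP]
      linear_combination h1
    have hBmem : B.det ∈ fittingIdeal R M' := by
      have := det_mem_fittingIdeal hψsurj hrow
      rwa [Matrix.det_reindex_self] at this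
    rw [hfinal]
    exact Ideal.mul_mem_mul (Ideal.mem_span_singleton_self x) (neg_mem hBmem)
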